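/- (Theorem 1(iii)) Assume W > 0 and 4I = zW. Then every configuration of the following two kinds attains the minimum of H_i^0 over all ion configurations: (a) configurations in which each site of one sublattice is occupied by all r ions while the complementary sublattice is empty; (b) if r = 2k is even, every configuration with n_x = k for all x, and if r = 2k+1 is odd, every configuration with n_x = k on one sublattice and n_x = k+1 on the complementary sublattice. In particular all these configurations have equal energy H_i^0. -/
import Mathlib


open Finset

/-- Occupation number (0 or 1) attached to a Boolean occupancy variable. -/
noncomputable def occ (b : Bool) : ℝ := if b then 1 else 0

/-- Total number of ions at site `x` (as a real number): `n_x = Σ_σ n_{x,σ}`. -/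
noncomputable def nsite {V : Type*} {r : ℕ} (C : V → Fin r → Bool) (x : V) : ℝ :=
  ∑ σ : Fin r, occ (C x σ)

/-- Total number of ions at site `x` (as a natural number). -/
def nnat {V : Type*} {r : ℕ} (C : V → Fin r → Bool) (x : V) : ℕ :=
  ∑ σ : Fin r, (if C x σ then 1 else 0)

/-- The classical Hamiltonian
`H_i^0(C) = 2I Σ_x Σ_{σ'<σ''} (n_{x,σ'} - 1/2)(n_{x,σ''} - 1/2)
          + (W/2) Σ_{⟨x,y⟩} (n_x - r/2)(n_y - r/2)`,
where the sum over edges `⟨x,y⟩` (each edge counted once) is written as half the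
symmetric double sum over ordered adjacent pairs. -/
noncomputable def H0 {V : Type*} [Fintype V] (G : SimpleGraph V) [DecidableRel G.Adj]
    (r : ℕ) (I W : ℝ) (C : V → Fin r → Bool) : ℝ :=
  2 * I * ∑ x : V, ∑ p ∈ Finset.univ.filter (fun p : Fin r × Fin r => p.1 < p.2),
      (occ (C x p.1) - 1 / 2) * (occ (C x p.2) - 1 / 2)
  + W / 2 * ((∑ x : V, ∑ y : V,
      (if G.Adj x y then (nsite C x - r / 2) * (nsite C y - r / 2) else 0)) / 2)

lemma sq_sum_eq_aux {r : ℕ} (f : Fin r → ℝ) :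
    (∑ σ, f σ)^2 = (∑ σ, (f σ)^2)
      + 2 * ∑ p ∈ Finset.univ.filter (fun p : Fin r × Fin r => p.1 < p.2), f p.1 * f p.2 := by
  have h1 : (∑ σ, f σ)^2 = ∑ p : Fin r × Fin r, f p.1 * f p.2 := by
    rw [sq, Finset.sum_mul_sum, ← Finset.sum_product']
    rfl
  have hdiag : ∑ p ∈ Finset.univ.filter (fun p : Fin r × Fin r => p.1 = p.2), f p.1 * f p.2
      = ∑ σ, (f σ)^2 := by
    apply Finset.sum_nbij' (fun p => p.1) (fun σ => (σ, σ)) <;> simp +contextual [sq, eq_comm]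
  have hswap : ∑ p ∈ Finset.univ.filter (fun p : Fin r × Fin r => p.2 < p.1), f p.1 * f p.2
      = ∑ p ∈ Finset.univ.filter (fun p : Fin r × Fin r => p.1 < p.2), f p.1 * f p.2 := by
    apply Finset.sum_nbij' (fun p => (p.2, p.1)) (fun p => (p.2, p.1)) <;>
      simp +contextual [mul_comm]
  have h2 : ∑ p : Fin r × Fin r, f p.1 * f p.2
      = (∑ p ∈ Finset.univ.filter (fun p : Fin r × Fin r => p.1 = p.2), f p.1 * f p.2)
      + ((∑ p ∈ Finset.univ.filter (fun p : Fin r × Fin r => p.1 < p.2), f p.1 * f p.2)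
      + (∑ p ∈ Finset.univ.filter (fun p : Fin r × Fin r => p.2 < p.1), f p.1 * f p.2)) := by
    rw [← Finset.sum_filter_add_sum_filter_not Finset.univ (fun p : Fin r × Fin r => p.1 = p.2)]
    congr 1
    rw [← Finset.sum_filter_add_sum_filter_not
      (Finset.univ.filter (fun p : Fin r × Fin r => ¬ p.1 = p.2)) (fun p => p.1 < p.2),
      Finset.filter_filter, Finset.filter_filter]
    congr 1 <;> apply Finset.sum_congr _ (fun _ _ => rfl) <;>
      · apply Finset.filter_congr
        intro p _
        constructor
        · omega
        · intro h; omega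
  rw [h1, h2, hdiag, hswap]; ring

-- onsite identity
lemma onsite_eq {r : ℕ} {V : Type*} (C : V → Fin r → Bool) (x : V) :
    ∑ p ∈ Finset.univ.filter (fun p : Fin r × Fin r => p.1 < p.2),
      (occ (C x p.1) - 1 / 2) * (occ (C x p.2) - 1 / 2)
    = ((nsite C x - r / 2)^2 - r / 4) / 2 := by
  have h := sq_sum_eq_aux (fun σ => occ (C x σ) - 1 / 2)
  have hsum : ∑ σ : Fin r, (occ (C x σ) - 1 / 2) = nsite C x - r / 2 := by
    rw [Finset.sum_sub_distrib, nsite]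
    simp
    ring
  have hsq : ∑ σ : Fin r, (occ (C x σ) - 1 / 2)^2 = (r : ℝ) / 4 := by
    have : ∀ σ : Fin r, (occ (C x σ) - 1 / 2)^2 = 1 / 4 := by
      intro σ; cases C x σ <;> simp [occ] <;> norm_num
    rw [Finset.sum_congr rfl (fun σ _ => this σ)]
    simp
    ring
  rw [hsum, hsq] at h
  linarith

-- regular degree sum
lemma deg_sum {V : Type*} [Fintype V] (G : SimpleGraph V) [DecidableRel G.Adj] {z : ℕ}
    (hreg : G.IsRegularOfDegree z) (x : V) (c : ℝ) :
    ∑ y : V, (if G.Adj x y then c else 0) = z * c := by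
  rw [Finset.sum_ite, Finset.sum_const, Finset.sum_const_zero, add_zero,
    ← SimpleGraph.neighborFinset_eq_filter, ← SimpleGraph.degree, hreg x, nsmul_eq_mul]

example : True := trivial

lemma H0_eq {V : Type*} [Fintype V] (G : SimpleGraph V) [DecidableRel G.Adj]
    {z : ℕ} (r : ℕ) (I W : ℝ) (hreg : G.IsRegularOfDegree z)
    (hIW : 4 * I = (z : ℝ) * W) (C : V → Fin r → Bool) :
    H0 G r I W C
      = W / 8 * (∑ x : V, ∑ y : V,
          (if G.Adj x y then ((nsite C x - r / 2) + (nsite C y - r / 2))^2 else 0))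
        - I * r * (Fintype.card V) / 4 := by
  set m : V → ℝ := fun x => nsite C x - r / 2 with hm
  have F1 : (∑ x : V, ∑ p ∈ Finset.univ.filter (fun p : Fin r × Fin r => p.1 < p.2),
      (occ (C x p.1) - 1 / 2) * (occ (C x p.2) - 1 / 2))
      = ∑ x : V, ((m x)^2 - r / 4) / 2 :=
    Finset.sum_congr rfl (fun x _ => onsite_eq C x)
  have F2 : (∑ x : V, ∑ y : V, (if G.Adj x y then (m x)^2 else 0))
      = (z : ℝ) * ∑ x : V, (m x)^2 := by
    rw [Finset.mul_sum]
    exact Finset.sum_congr rfl (fun x _ => deg_sum G hreg x _)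
  have F3 : (∑ x : V, ∑ y : V, (if G.Adj x y then (m y)^2 else 0))
      = (z : ℝ) * ∑ x : V, (m x)^2 := by
    rw [Finset.sum_comm, Finset.mul_sum]
    refine Finset.sum_congr rfl (fun y _ => ?_)
    rw [← deg_sum G hreg y ((m y)^2)]
    exact Finset.sum_congr rfl (fun x _ => by simp only [SimpleGraph.adj_comm])
  have expand : (∑ x : V, ∑ y : V, (if G.Adj x y then (m x + m y)^2 else 0))
      = (∑ x : V, ∑ y : V, (if G.Adj x y then (m x)^2 else 0))
      + (∑ x : V, ∑ y : V, (if G.Adj x y then (m y)^2 else 0))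
      + 2 * (∑ x : V, ∑ y : V, (if G.Adj x y then m x * m y else 0)) := by
    rw [Finset.mul_sum, ← Finset.sum_add_distrib, ← Finset.sum_add_distrib]
    refine Finset.sum_congr rfl (fun x _ => ?_)
    rw [Finset.mul_sum, ← Finset.sum_add_distrib, ← Finset.sum_add_distrib]
    refine Finset.sum_congr rfl (fun y _ => ?_)
    by_cases h : G.Adj x y <;> simp [h] <;> ring
  have Fsplit : ∑ x : V, ((m x)^2 - r / 4) / 2
      = ((∑ x : V, (m x)^2) - (Fintype.card V) * (r / 4)) / 2 := by
    rw [← Finset.sum_div, Finset.sum_sub_distrib, Finset.sum_const, Finset.card_univ,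
      nsmul_eq_mul]
  unfold H0
  rw [F1, expand, F2, F3, Fsplit]
  linear_combination ((∑ x : V, (m x)^2) / 4) * hIW

lemma nsite_eq_nnat {V : Type*} {r : ℕ} (C : V → Fin r → Bool) (x : V) :
    nsite C x = (nnat C x : ℝ) := by
  unfold nsite nnat occ
  push_cast
  exact Finset.sum_congr rfl (fun σ _ => by cases C x σ <;> simp)

/-- **Theorem 1(iii).** For `W > 0` and `4I = zW`, every configuration of
kind (a) (one sublattice fully occupied by all `r` ions, the other empty) or of kind (b)
(`n_x = k` everywhere if `r = 2k`; `n_x = k` on one sublattice and `n_x = k+1` on the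
other if `r = 2k+1`) minimizes `H_i^0`; in particular all of them have equal energy. -/
theorem statement8
    {V : Type*} [Fintype V] [DecidableEq V]
    (G : SimpleGraph V) [DecidableRel G.Adj]
    (z r : ℕ) (hz : 2 ≤ z) (hr : 2 ≤ r)
    (hreg : G.IsRegularOfDegree z) (hconn : G.Connected)
    (Λe Λo : Finset V)
    (hcover : ∀ v : V, v ∈ Λe ∨ v ∈ Λo) (hdisj : Disjoint Λe Λo)
    (hbip : ∀ x y : V, G.Adj x y → (x ∈ Λe ∧ y ∈ Λo) ∨ (x ∈ Λo ∧ y ∈ Λe))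
    (I W : ℝ) (hW : 0 < W) (hIW : 4 * I = (z : ℝ) * W) :
    ∀ C : V → Fin r → Bool,
      ((C = fun x _ => decide (x ∈ Λe)) ∨ (C = fun x _ => decide (x ∈ Λo)) ∨
        (∃ k : ℕ, r = 2 * k ∧ ∀ x : V, nnat C x = k) ∨
        (∃ k : ℕ, r = 2 * k + 1 ∧
          (((∀ x ∈ Λe, nnat C x = k) ∧ (∀ x ∈ Λo, nnat C x = k + 1)) ∨
           ((∀ x ∈ Λe, nnat C x = k + 1) ∧ (∀ x ∈ Λo, nnat C x = k))))) →
      ∀ C' : V → Fin r → Bool, H0 G r I W C ≤ H0 G r I W C' := by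
  intro C hC C'
  have hedge : ∀ x y : V, G.Adj x y → nnat C x + nnat C y = r := by
    have hfull : ∀ (s : Finset V) (x : V),
        nnat (fun x (_ : Fin r) => decide (x ∈ s)) x = if x ∈ s then r else 0 := by
      intro s x
      by_cases hx : x ∈ s <;> simp [nnat, hx]
    rcases hC with h | h | ⟨k, hk, hall⟩ | ⟨k, hk, hcase⟩
    · subst h
      intro x y hxy
      rcases hbip x y hxy with ⟨hxe, hyo⟩ | ⟨hxo, hye⟩
      · have hy : y ∉ Λe := Finset.disjoint_right.mp hdisj hyo
        rw [hfull, hfull]; simp [hxe, hy]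
      · have hx : x ∉ Λe := Finset.disjoint_right.mp hdisj hxo
        rw [hfull, hfull]; simp [hx, hye]
    · subst h
      intro x y hxy
      rcases hbip x y hxy with ⟨hxe, hyo⟩ | ⟨hxo, hye⟩
      · have hx : x ∉ Λo := Finset.disjoint_left.mp hdisj hxe
        rw [hfull, hfull]; simp [hx, hyo]
      · have hy : y ∉ Λo := Finset.disjoint_left.mp hdisj hye
        rw [hfull, hfull]; simp [hxo, hy]
    · intro x y hxy; rw [hall x, hall y]; omega
    · intro x y hxy
      rcases hcase with ⟨he, ho⟩ | ⟨he, ho⟩ <;>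
        rcases hbip x y hxy with ⟨hxe, hyo⟩ | ⟨hxo, hye⟩
      · rw [he x hxe, ho y hyo]; omega
      · rw [ho x hxo, he y hye]; omega
      · rw [he x hxe, ho y hyo]; omega
      · rw [ho x hxo, he y hye]; omega
  rw [H0_eq G r I W hreg hIW C, H0_eq G r I W hreg hIW C']
  have hzero : (∑ x : V, ∑ y : V,
      (if G.Adj x y then ((nsite C x - r / 2) + (nsite C y - r / 2))^2 else 0)) = 0 := by
    refine Finset.sum_eq_zero (fun x _ => Finset.sum_eq_zero (fun y _ => ?_))
    by_cases h : G.Adj x y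
    · have h1 := hedge x y h
      have h2 : (nnat C x : ℝ) + (nnat C y : ℝ) = r := by exact_mod_cast congrArg Nat.cast h1
      rw [if_pos h, nsite_eq_nnat, nsite_eq_nnat]
      have : (nnat C x : ℝ) - r / 2 + ((nnat C y : ℝ) - r / 2) = 0 := by linarith
      rw [this]; ring
    · rw [if_neg h]
  have hnonneg : 0 ≤ (∑ x : V, ∑ y : V,
      (if G.Adj x y then ((nsite C' x - r / 2) + (nsite C' y - r / 2))^2 else 0)) := by
    refine Finset.sum_nonneg (fun x _ => Finset.sum_nonneg (fun y _ => ?_))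
    by_cases h : G.Adj x y
    · rw [if_pos h]; positivity
    · rw [if_neg h]
  rw [hzero]
  have : 0 ≤ W / 8 * (∑ x : V, ∑ y : V,
      (if G.Adj x y then ((nsite C' x - r / 2) + (nsite C' y - r / 2))^2 else 0)) := by
    apply mul_nonneg (by linarith) hnonneg
  linarith
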